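/- Let M be a finite matroid and let {F, L} be a non-modular pair of flats of M such that the modular cut 𝓜 generated by {F, L} is non-principal. Let N = M +_𝓜 e be the single-element extension of M by 𝓜. Then F ∪ {e} and L ∪ {e} are flats of N, and the modular defect of the pair {F ∪ {e}, L ∪ {e}} computed in N equals the modular defect of the pair {F, L} computed in M minus 1. -/

import Mathlib

open Set Matroid
open scoped Matroid

namespace SMC

variable {α : Type*}

/-- The rank of a set `X` in a matroid `M`: the maximum cardinality of an
independent subset of `X` (intended for finite matroids). -/
noncomputable def rk (M : Matroid α) (X : Set α) : ℕ :=
  sSup {n | ∃ I, M.Indep I ∧ I ⊆ X ∧ I.ncard = n}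

/-- The rank of a matroid: the rank of its ground set. -/
noncomputable def rkM (M : Matroid α) : ℕ := rk M M.E

/-- The modular defect of a pair of sets:
`r(X) + r(Y) - r(X ∪ Y) - r(X ∩ Y)` (a natural number). -/
noncomputable def pairDefect (M : Matroid α) (X Y : Set α) : ℕ :=
  rk M X + rk M Y - rk M (X ∪ Y) - rk M (X ∩ Y)

/-- A pair of sets is a modular pair if its modular defect is zero. -/
def ModularPair (M : Matroid α) (X Y : Set α) : Prop := pairDefect M X Y = 0

/-- A matroid is modular if every pair of flats is a modular pair. -/
def Modular (M : Matroid α) : Prop :=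
  ∀ F L : Set α, M.IsFlat F → M.IsFlat L → ModularPair M F L

/-- A matroid (of rank at least 3) is hypermodular if every pair of flats of
rank `r(M) - 1` is a modular pair. -/
def Hypermodular (M : Matroid α) : Prop :=
  ∀ F L : Set α, M.IsFlat F → M.IsFlat L →
    rk M F + 1 = rkM M → rk M L + 1 = rkM M → ModularPair M F L

/-- A modular cut of `M`: a collection of flats that is upward closed and
closed under intersections of modular pairs. -/
def ModularCut (M : Matroid α) (𝓜 : Set (Set α)) : Prop :=
  (∀ F ∈ 𝓜, M.IsFlat F) ∧
  (∀ L ∈ 𝓜, ∀ F : Set α, M.IsFlat F → L ⊆ F → F ∈ 𝓜) ∧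
  (∀ F ∈ 𝓜, ∀ L ∈ 𝓜, ModularPair M F L → F ∩ L ∈ 𝓜)

/-- A principal modular cut: the collection of all flats containing some fixed flat. -/
def PrincipalCut (M : Matroid α) (𝓜 : Set (Set α)) : Prop :=
  ∃ F : Set α, M.IsFlat F ∧ 𝓜 = {L | M.IsFlat L ∧ F ⊆ L}

/-- The modular cut generated by a collection `S` of flats:
the smallest modular cut containing `S`. -/
def genCut (M : Matroid α) (S : Set (Set α)) : Set (Set α) :=
  ⋂₀ {𝓜 | ModularCut M 𝓜 ∧ S ⊆ 𝓜}

/-- A Vámos line arrangement in a rank-4 matroid: four pairwise disjoint rank-2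
flats, the union of any three of which has rank 4, with `r(T₀ ∪ T₁) = 3`,
`r(Tᵢ ∪ Lⱼ) = 3` for all `i, j`, and `r(L₀ ∪ L₁) = 4`. -/
def VamosQuad (M : Matroid α) (T₀ T₁ L₀ L₁ : Set α) : Prop :=
  M.IsFlat T₀ ∧ M.IsFlat T₁ ∧ M.IsFlat L₀ ∧ M.IsFlat L₁ ∧
  rk M T₀ = 2 ∧ rk M T₁ = 2 ∧ rk M L₀ = 2 ∧ rk M L₁ = 2 ∧
  Disjoint T₀ T₁ ∧ Disjoint T₀ L₀ ∧ Disjoint T₀ L₁ ∧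
  Disjoint T₁ L₀ ∧ Disjoint T₁ L₁ ∧ Disjoint L₀ L₁ ∧
  rk M (T₀ ∪ T₁ ∪ L₀) = 4 ∧ rk M (T₀ ∪ T₁ ∪ L₁) = 4 ∧
  rk M (T₀ ∪ L₀ ∪ L₁) = 4 ∧ rk M (T₁ ∪ L₀ ∪ L₁) = 4 ∧
  rk M (T₀ ∪ T₁) = 3 ∧
  rk M (T₀ ∪ L₀) = 3 ∧ rk M (T₀ ∪ L₁) = 3 ∧
  rk M (T₁ ∪ L₀) = 3 ∧ rk M (T₁ ∪ L₁) = 3 ∧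
  rk M (L₀ ∪ L₁) = 4

/-- The modular defect of a matroid: the sum of the modular defects of all
unordered pairs of flats (the sum over ordered pairs is twice this). -/
noncomputable def matroidDefect (M : Matroid α) : ℕ :=
  (∑ᶠ F ∈ {F | M.IsFlat F}, ∑ᶠ L ∈ {L | M.IsFlat L}, pairDefect M F L) / 2


/-! ### Auxiliary lemmas -/

lemma closure_flat' (M : Matroid α) (X : Set α) : M.IsFlat (M.closure X) := by
  rw [Matroid.closure_def]
  have hne : Nonempty {F // F ∈ {F | M.IsFlat F ∧ X ∩ M.E ⊆ F}} :=
    ⟨⟨M.E, M.ground_isFlat, inter_subset_right⟩⟩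
  rw [sInter_eq_iInter]
  exact Matroid.IsFlat.iInter fun F => F.2.1

lemma ncard_le_of_indep_subset_closure {M : Matroid α} (hfin : M.E.Finite)
    {I J : Set α} (hJ : M.Indep J) (hI : M.Indep I) (h : J ⊆ M.closure I) :
    J.ncard ≤ I.ncard := by
  obtain ⟨J', hJ', hJJ'⟩ := hJ.subset_isBasis_of_subset h (M.closure_subset_ground I)
  have hIb : M.IsBasis I (M.closure I) := hI.isBasis_closure
  have hcard : J'.encard = I.encard := hJ'.encard_eq_encard hIb
  have hJ'fin : J'.Finite := hfin.subset hJ'.indep.subset_ground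
  calc J.ncard ≤ J'.ncard := ncard_le_ncard hJJ' hJ'fin
    _ = I.ncard := by rw [ncard_def, hcard, ← ncard_def]

lemma rk_eq_ncard {M : Matroid α} (hfin : M.E.Finite) {I X : Set α}
    (hI : M.IsBasis' I X) : rk M X = I.ncard := by
  have hub : ∀ n ∈ {n | ∃ J, M.Indep J ∧ J ⊆ X ∧ J.ncard = n}, n ≤ I.ncard := by
    rintro n ⟨J, hJ, hJX, rfl⟩
    refine ncard_le_of_indep_subset_closure hfin hJ hI.indep ?_
    refine (M.subset_closure J hJ.subset_ground).trans ?_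
    rw [hI.closure_eq_closure]
    exact M.closure_subset_closure hJX
  have hmem : I.ncard ∈ {n | ∃ J, M.Indep J ∧ J ⊆ X ∧ J.ncard = n} :=
    ⟨I, hI.indep, hI.subset, rfl⟩
  unfold rk
  exact le_antisymm (csSup_le ⟨_, hmem⟩ hub) (le_csSup ⟨I.ncard, fun n hn => hub n hn⟩ hmem)

lemma rk_le_of_inter_subset_closure {M : Matroid α} (hfin : M.E.Finite) {X Y : Set α}
    (h : X ∩ M.E ⊆ M.closure Y) : rk M X ≤ rk M Y := by
  obtain ⟨I, hI⟩ := M.exists_isBasis' X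
  obtain ⟨J, hJ⟩ := M.exists_isBasis' Y
  rw [rk_eq_ncard hfin hI, rk_eq_ncard hfin hJ]
  refine ncard_le_of_indep_subset_closure hfin hI.indep hJ.indep ?_
  have hIX : I ⊆ X ∩ M.E := subset_inter hI.subset hI.indep.subset_ground
  rw [hJ.closure_eq_closure]
  exact hIX.trans h

lemma rk_mono {M : Matroid α} (hfin : M.E.Finite) {X Y : Set α} (h : X ⊆ Y) :
    rk M X ≤ rk M Y :=
  rk_le_of_inter_subset_closure hfin fun x hx =>
    M.mem_closure_of_mem' (h hx.1) hx.2

lemma rk_insert_of_mem_closure {M : Matroid α} (hfin : M.E.Finite) {X : Set α} {x : α}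
    (h : x ∈ M.closure X) : rk M (insert x X) = rk M X := by
  refine le_antisymm (rk_le_of_inter_subset_closure hfin ?_) (rk_mono hfin (subset_insert _ _))
  rintro y ⟨hy, hyE⟩
  rcases hy with rfl | hy
  · exact h
  · exact M.mem_closure_of_mem' hy hyE

lemma rk_insert_of_not_mem_closure {M : Matroid α} (hfin : M.E.Finite) {X : Set α} {x : α}
    (hxE : x ∈ M.E) (hx : x ∉ M.closure X) : rk M (insert x X) = rk M X + 1 := by
  obtain ⟨I, hI⟩ := M.exists_isBasis' X
  have hclI : M.closure I = M.closure X := hI.closure_eq_closure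
  have hxI : x ∉ I := fun hxI => hx (hclI ▸ M.mem_closure_of_mem' hxI hxE)
  have hind : M.Indep (insert x I) := by
    rw [hI.indep.insert_indep_iff_of_notMem hxI]
    exact ⟨hxE, by rw [hclI]; exact hx⟩
  have hb : M.IsBasis (insert x I) ((insert x X) ∩ M.E) := by
    refine hind.isBasis_of_subset_of_subset_closure ?_ ?_
    · refine insert_subset ⟨mem_insert _ _, hxE⟩ ?_
      exact (subset_inter hI.subset hI.indep.subset_ground).trans
        (inter_subset_inter_left _ (subset_insert _ _))
    · rintro y ⟨hy, hyE⟩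
      rcases hy with rfl | hy
      · exact M.mem_closure_of_mem' (mem_insert _ _) hyE
      · have : y ∈ M.closure X := M.mem_closure_of_mem' hy hyE
        rw [← hclI] at this
        exact M.closure_subset_closure (subset_insert _ _) this
  have hIfin : I.Finite := hfin.subset hI.indep.subset_ground
  rw [rk_eq_ncard hfin (isBasis'_iff_isBasis_inter_ground.mpr hb), rk_eq_ncard hfin hI,
    ncard_insert_of_notMem hxI hIfin]

/-- Let M be a finite matroid and {F, L} a non-modular pair of
flats generating a non-principal modular cut 𝓜, and let N = M +_𝓜 e be the
single-element extension of M by 𝓜 (characterized by its ground set and rank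
function). Then F ∪ {e} and L ∪ {e} are flats of N, and the modular defect of
{F ∪ {e}, L ∪ {e}} in N is one less than that of {F, L} in M. -/
theorem statement_16 {α : Type*} (M : Matroid α) (hfin : M.E.Finite)
    (F L : Set α) (hF : M.IsFlat F) (hL : M.IsFlat L)
    (hpair : ¬ ModularPair M F L)
    (𝓜 : Set (Set α)) (h𝓜 : 𝓜 = genCut M {F, L}) (hnp : ¬ PrincipalCut M 𝓜)
    (e : α) (he : e ∉ M.E) (N : Matroid α) (hNE : N.E = M.E ∪ {e})
    (hNr : ∀ X ⊆ N.E,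
      (e ∈ X ∧ M.closure (X \ {e}) ∉ 𝓜 → rk N X = rk M (X \ {e}) + 1) ∧
      (¬ (e ∈ X ∧ M.closure (X \ {e}) ∉ 𝓜) → rk N X = rk M (X \ {e}))) :
    N.IsFlat (F ∪ {e}) ∧ N.IsFlat (L ∪ {e}) ∧
      pairDefect N (F ∪ {e}) (L ∪ {e}) = pairDefect M F L - 1 := by
  have hFE : F ⊆ M.E := hF.subset_ground
  have hLE : L ⊆ M.E := hL.subset_ground
  have heF : e ∉ F := fun h => he (hFE h)
  have heL : e ∉ L := fun h => he (hLE h)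
  have hNfin : N.E.Finite := by rw [hNE]; exact hfin.union (finite_singleton e)
  -- 𝓜 membership facts
  have hF𝓜 : F ∈ 𝓜 := by
    rw [h𝓜]
    exact fun 𝓝 h𝓝 => h𝓝.2 (mem_insert _ _)
  have hL𝓜 : L ∈ 𝓜 := by
    rw [h𝓜]
    exact fun 𝓝 h𝓝 => h𝓝.2 (mem_insert_of_mem _ rfl)
  have hup : ∀ G ∈ 𝓜, ∀ G', M.IsFlat G' → G ⊆ G' → G' ∈ 𝓜 := by
    rw [h𝓜]
    intro G hG G' hG' hsub 𝓝 h𝓝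
    exact h𝓝.1.2.1 G (hG 𝓝 h𝓝) G' hG' hsub
  -- the closure of F ∩ L is not in 𝓜 (else 𝓜 would be principal)
  set K := M.closure (F ∩ L) with hK
  have hKflat : M.IsFlat K := closure_flat' M _
  have hKF : K ⊆ F :=
    (M.closure_subset_closure inter_subset_left).trans hF.closure.subset
  have hKL : K ⊆ L :=
    (M.closure_subset_closure inter_subset_right).trans hL.closure.subset
  have hPmc : ModularCut M {G | M.IsFlat G ∧ K ⊆ G} := by
    refine ⟨fun G hG => hG.1, fun G hG G' hG' hsub => ⟨hG', hG.2.trans hsub⟩, ?_⟩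
    intro G hG H hH _
    refine ⟨?_, subset_inter hG.2 hH.2⟩
    have hGH : M.closure (G ∩ H) = G ∩ H := by
      apply subset_antisymm
      · exact subset_inter
          ((M.closure_subset_closure inter_subset_left).trans hG.1.closure.subset)
          ((M.closure_subset_closure inter_subset_right).trans hH.1.closure.subset)
      · exact M.subset_closure _ (inter_subset_left.trans hG.1.subset_ground)
    exact hGH ▸ closure_flat' M _
  have hK𝓜 : K ∉ 𝓜 := by
    intro hKmem
    apply hnp
    refine ⟨K, hKflat, subset_antisymm ?_ ?_⟩
    · rw [h𝓜]
      refine sInter_subset_of_mem ⟨hPmc, ?_⟩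
      rintro G hG
      rcases hG with rfl | hG
      · exact ⟨hF, hKF⟩
      · rw [mem_singleton_iff] at hG
        subst hG
        exact ⟨hL, hKL⟩
    · intro G hG
      exact hup K hKmem G hG.1 hG.2
  -- rank computations in N
  have hSF : F ∪ {e} ⊆ N.E := by
    rw [hNE]
    exact union_subset (hFE.trans subset_union_left) subset_union_right
  have hSL : L ∪ {e} ⊆ N.E := by
    rw [hNE]
    exact union_subset (hLE.trans subset_union_left) subset_union_right
  have hdF : (F ∪ {e}) \ {e} = F := by
    rw [union_singleton, insert_diff_self_of_notMem heF]
  have hdL : (L ∪ {e}) \ {e} = L := by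
    rw [union_singleton, insert_diff_self_of_notMem heL]
  have hrF : rk N (F ∪ {e}) = rk M F := by
    have h2 := (hNr (F ∪ {e}) hSF).2
    rw [hdF] at h2
    refine h2 ?_
    rintro ⟨-, hcl⟩
    rw [hF.closure] at hcl
    exact hcl hF𝓜
  have hrL : rk N (L ∪ {e}) = rk M L := by
    have h2 := (hNr (L ∪ {e}) hSL).2
    rw [hdL] at h2
    refine h2 ?_
    rintro ⟨-, hcl⟩
    rw [hL.closure] at hcl
    exact hcl hL𝓜
  -- union
  have hUeq : (F ∪ {e}) ∪ (L ∪ {e}) = (F ∪ L) ∪ {e} := by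
    ext x; simp only [mem_union, mem_singleton_iff]; tauto
  have hdU : ((F ∪ L) ∪ {e}) \ {e} = F ∪ L := by
    rw [union_singleton, insert_diff_self_of_notMem (by simp [heF, heL])]
  have hFLE : F ∪ L ⊆ M.E := union_subset hFE hLE
  have hFL𝓜 : M.closure (F ∪ L) ∈ 𝓜 :=
    hup F hF𝓜 _ (closure_flat' M _)
      (M.subset_closure_of_subset subset_union_left hFLE)
  have hrU : rk N ((F ∪ L) ∪ {e}) = rk M (F ∪ L) := by
    have hsub : (F ∪ L) ∪ {e} ⊆ N.E := by
      rw [hNE]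
      exact union_subset (hFLE.trans subset_union_left) subset_union_right
    have h2 := (hNr _ hsub).2
    rw [hdU] at h2
    exact h2 (by rintro ⟨-, hcl⟩; exact hcl hFL𝓜)
  -- intersection
  have hIeq : (F ∪ {e}) ∩ (L ∪ {e}) = (F ∩ L) ∪ {e} := by
    ext x; simp only [mem_union, mem_inter_iff, mem_singleton_iff]; tauto
  have hdI : ((F ∩ L) ∪ {e}) \ {e} = F ∩ L := by
    rw [union_singleton, insert_diff_self_of_notMem (fun h => heF h.1)]
  have hrI : rk N ((F ∩ L) ∪ {e}) = rk M (F ∩ L) + 1 := by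
    have hsub : (F ∩ L) ∪ {e} ⊆ N.E := by
      rw [hNE]
      exact union_subset ((inter_subset_left.trans hFE).trans subset_union_left)
        subset_union_right
    have h1 := (hNr _ hsub).1
    rw [hdI] at h1
    exact h1 ⟨mem_union_right _ rfl, hK𝓜⟩
  -- flatness
  have hflat : ∀ G : Set α, M.IsFlat G → G ∈ 𝓜 → G ⊆ M.E → e ∉ G →
      rk N (G ∪ {e}) = rk M G → N.IsFlat (G ∪ {e}) := by
    intro G hG hG𝓜 hGE heG hrG
    have hSG : G ∪ {e} ⊆ N.E := by
      rw [hNE]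
      exact union_subset (hGE.trans subset_union_left) subset_union_right
    have hclS : N.closure (G ∪ {e}) = G ∪ {e} := by
      refine subset_antisymm ?_ (N.subset_closure _ hSG)
      intro x hx
      by_contra hxS
      have hxE : x ∈ N.E := N.closure_subset_ground _ hx
      have hxe : x ≠ e := by rintro rfl; exact hxS (mem_union_right _ rfl)
      have hxM : x ∈ M.E := by
        rcases (hNE ▸ hxE) with h | h
        · exact h
        · exact absurd h hxe
      have hxG : x ∉ G := fun h => hxS (mem_union_left _ h)
      have h1 : rk N (insert x (G ∪ {e})) = rk N (G ∪ {e}) :=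
        rk_insert_of_mem_closure hNfin hx
      have hins : insert x (G ∪ {e}) ⊆ N.E := insert_subset hxE hSG
      have hdiff2 : insert x (G ∪ {e}) \ {e} = insert x G := by
        have : insert x (G ∪ {e}) = (insert x G) ∪ {e} := by
          ext y; simp only [mem_insert_iff, mem_union, mem_singleton_iff]; tauto
        rw [this, union_singleton, insert_diff_self_of_notMem]
        simp only [mem_insert_iff, not_or]
        exact ⟨fun h => hxe h.symm, heG⟩
      have hrk2 : rk M (insert x G) = rk M G + 1 :=
        rk_insert_of_not_mem_closure hfin hxM (by rw [hG.closure]; exact hxG)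
      by_cases hc : M.closure (insert x G) ∈ 𝓜
      · have h2 := (hNr _ hins).2
        rw [hdiff2] at h2
        have := h2 (by rintro ⟨-, hcl⟩; exact hcl hc)
        rw [h1, hrG, hrk2] at this
        omega
      · have h2 := (hNr _ hins).1
        rw [hdiff2] at h2
        have := h2 ⟨mem_insert_of_mem _ (mem_union_right _ rfl), hc⟩
        rw [h1, hrG, hrk2] at this
        omega
    have := closure_flat' N (G ∪ {e})
    rwa [hclS] at this
  refine ⟨hflat F hF hF𝓜 hFE heF hrF, hflat L hL hL𝓜 hLE heL hrL, ?_⟩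
  simp only [ModularPair, pairDefect] at hpair ⊢
  rw [hUeq, hIeq, hrF, hrL, hrU, hrI]
  omega

end SMC
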